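/- For every real p ≥ 1 and all i, j ∈ {1, …, m}, ( E[ |J^C_{(i,j)}|^p ] )^{1/p} ≤ ((max{2, p} − 1 + 1/√2)/√2) · h. (Inequality (177) of Lemma 6.11.) -/

import Mathlib

open MeasureTheory ProbabilityTheory

section Stmt7Aux

open Real Set
open scoped NNReal ENNReal

/-- Log-convexity interpolation for `Γ(· + 1/2)` against a geometric target. -/
lemma stmt7_gamma_interp {a b q Cc : ℝ} (ha : 0 < a) (hab : a < b) (h1 : a ≤ q) (h2 : q ≤ b)
    (hCc : 0 < Cc) (hGa : Real.Gamma (a + 1/2) ≤ Real.sqrt π * Cc ^ a)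
    (hGb : Real.Gamma (b + 1/2) ≤ Real.sqrt π * Cc ^ b) :
    Real.Gamma (q + 1/2) ≤ Real.sqrt π * Cc ^ q := by
  have hba : 0 < b - a := by linarith
  set t : ℝ := (b - q) / (b - a) with ht
  have ht0 : 0 ≤ t := div_nonneg (by linarith) hba.le
  have ht1 : 0 ≤ 1 - t := by
    have : t ≤ 1 := by rw [ht, div_le_one hba]; linarith
    linarith
  have hts : t + (1 - t) = 1 := by ring
  have htb : t * (b - a) = b - q := by rw [ht]; exact div_mul_cancel₀ _ hba.ne'
  have hcomb : t * (a + 1/2) + (1 - t) * (b + 1/2) = q + 1/2 := by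
    linear_combination -htb
  have hexp : a * t + b * (1 - t) = q := by
    linear_combination -htb
  have hmem1 : (a + 1/2) ∈ Set.Ioi (0:ℝ) := by simp; linarith
  have hmem2 : (b + 1/2) ∈ Set.Ioi (0:ℝ) := by simp; linarith
  have hconv := Real.convexOn_log_Gamma.2 hmem1 hmem2 ht0 ht1 hts
  simp only [Function.comp_apply, smul_eq_mul] at hconv
  rw [hcomb] at hconv
  have hGq : 0 < Real.Gamma (q + 1/2) := Real.Gamma_pos_of_pos (by linarith)
  have hGa' : 0 < Real.Gamma (a + 1/2) := Real.Gamma_pos_of_pos (by linarith)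
  have hGb' : 0 < Real.Gamma (b + 1/2) := Real.Gamma_pos_of_pos (by linarith)
  have hπ : 0 < Real.sqrt π := Real.sqrt_pos.mpr Real.pi_pos
  have hXa : 0 < Real.sqrt π * Cc ^ a := by positivity
  have hXb : 0 < Real.sqrt π * Cc ^ b := by positivity
  have hla : Real.log (Real.Gamma (a+1/2)) ≤ Real.log (Real.sqrt π * Cc ^ a) :=
    Real.log_le_log hGa' hGa
  have hlb : Real.log (Real.Gamma (b+1/2)) ≤ Real.log (Real.sqrt π * Cc ^ b) :=
    Real.log_le_log hGb' hGb
  calc Real.Gamma (q + 1/2) = Real.exp (Real.log (Real.Gamma (q + 1/2))) :=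
        (Real.exp_log hGq).symm
    _ ≤ Real.exp (t * Real.log (Real.sqrt π * Cc ^ a)
          + (1 - t) * Real.log (Real.sqrt π * Cc ^ b)) := by
        apply Real.exp_le_exp.mpr
        refine le_trans hconv ?_
        have := mul_le_mul_of_nonneg_left hla ht0
        have := mul_le_mul_of_nonneg_left hlb ht1
        linarith
    _ = (Real.sqrt π * Cc ^ a) ^ t * (Real.sqrt π * Cc ^ b) ^ (1 - t) := by
        rw [Real.rpow_def_of_pos hXa, Real.rpow_def_of_pos hXb, ← Real.exp_add]
        ring_nf
    _ = Real.sqrt π * Cc ^ q := by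
        rw [Real.mul_rpow hπ.le (Real.rpow_nonneg hCc.le _),
          Real.mul_rpow hπ.le (Real.rpow_nonneg hCc.le _),
          ← Real.rpow_mul hCc.le, ← Real.rpow_mul hCc.le]
        calc Real.sqrt π ^ t * Cc ^ (a * t) * (Real.sqrt π ^ (1-t) * Cc ^ (b * (1-t)))
            = (Real.sqrt π ^ t * Real.sqrt π ^ (1-t)) * (Cc ^ (a*t) * Cc ^ (b*(1-t))) := by
              ring
          _ = Real.sqrt π ^ (t + (1-t)) * Cc ^ (a*t + b*(1-t)) := by
              rw [← Real.rpow_add hπ, ← Real.rpow_add hCc]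
          _ = Real.sqrt π * Cc ^ q := by rw [hts, hexp, Real.rpow_one]

lemma stmt7_G1h : Real.Gamma (1 + 1/2) = Real.sqrt π / 2 := by
  rw [show (1 + 1/2 : ℝ) = 1/2 + 1 by norm_num, Real.Gamma_add_one (by norm_num),
    Real.Gamma_one_half_eq]
  ring

lemma stmt7_G2h : Real.Gamma (2 + 1/2) = 3/4 * Real.sqrt π := by
  rw [show (2 + 1/2 : ℝ) = (1 + 1/2) + 1 by norm_num, Real.Gamma_add_one (by norm_num),
    stmt7_G1h]
  ring

lemma stmt7_G3h : Real.Gamma (3 + 1/2) = 15/8 * Real.sqrt π := by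
  rw [show (3 + 1/2 : ℝ) = (2 + 1/2) + 1 by norm_num, Real.Gamma_add_one (by norm_num),
    stmt7_G2h]
  ring

lemma stmt7_G4h : Real.Gamma (4 + 1/2) = 105/16 * Real.sqrt π := by
  rw [show (4 + 1/2 : ℝ) = (3 + 1/2) + 1 by norm_num, Real.Gamma_add_one (by norm_num),
    stmt7_G3h]
  ring

lemma stmt7_G3 : Real.Gamma (3 : ℝ) = 2 := by
  rw [show (3:ℝ) = (2:ℕ) + 1 by norm_num, Real.Gamma_nat_eq_factorial]
  norm_num

lemma stmt7_sqrt2_sq : Real.sqrt 2 ^ 2 = 2 := Real.sq_sqrt (by norm_num)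

lemma stmt7_sqrt2_lb : (1.41 : ℝ) ≤ Real.sqrt 2 := by
  have h := stmt7_sqrt2_sq
  nlinarith [Real.sqrt_nonneg 2, sq_nonneg (Real.sqrt 2 - 1.415)]

lemma stmt7_sqrt2_ub : Real.sqrt 2 ≤ 1.415 := by
  have h := stmt7_sqrt2_sq
  nlinarith [Real.sqrt_nonneg 2, sq_nonneg (Real.sqrt 2 - 1.415)]

/-- `Ck n = (n-1)/√2 + 1/2`, the value of the target constant at `p = n`. -/
noncomputable def stmt7Ck (n : ℕ) : ℝ := ((n:ℝ) - 1) / Real.sqrt 2 + 1/2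

lemma stmt7Ck_pos {n : ℕ} (hn : 1 ≤ n) : 0 < stmt7Ck n := by
  have h1 : (1:ℝ) ≤ (n:ℝ) := by exact_mod_cast hn
  have := stmt7_sqrt2_lb
  unfold stmt7Ck
  have h0 : 0 ≤ ((n:ℝ) - 1) / Real.sqrt 2 := div_nonneg (by linarith) (Real.sqrt_nonneg 2)
  linarith

lemma stmt7Ck_succ (n : ℕ) : stmt7Ck (n+1) = stmt7Ck n + 1 / Real.sqrt 2 := by
  have hc0 : (0:ℝ) < Real.sqrt 2 := by
    have := stmt7_sqrt2_lb; linarith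
  unfold stmt7Ck
  push_cast
  have h : ((n:ℝ)-1)/Real.sqrt 2 + 1/Real.sqrt 2 = ((n:ℝ)+1-1)/Real.sqrt 2 := by
    rw [← add_div]; norm_num
  linarith

lemma stmt7Ck_mono {n : ℕ} : stmt7Ck n ≤ stmt7Ck (n+1) := by
  rw [stmt7Ck_succ]
  have hc0 : (0:ℝ) < Real.sqrt 2 := by
    have := stmt7_sqrt2_lb; linarith
  have : 0 ≤ 1 / Real.sqrt 2 := by positivity
  linarith

/-- Core algebraic step for the induction, via Bernoulli's inequality. -/
lemma stmt7_core (n : ℕ) (hn : 3 ≤ n) :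
    ((n:ℝ) + 1 + 1/2) * stmt7Ck n ^ (n+1) ≤ stmt7Ck (n+1) ^ (n+2) := by
  have hc2 := stmt7_sqrt2_sq
  have hcl := stmt7_sqrt2_lb
  have hcu := stmt7_sqrt2_ub
  have hc0 : (0:ℝ) < Real.sqrt 2 := by linarith
  have hn3 : (3:ℝ) ≤ (n:ℝ) := by exact_mod_cast hn
  have hCk : 0 < stmt7Ck n := stmt7Ck_pos (by omega)
  have hCk1 : 0 < stmt7Ck (n+1) := stmt7Ck_pos (by omega)
  set x : ℝ := 1 / (Real.sqrt 2 * stmt7Ck n) with hx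
  have hx0 : 0 ≤ x := by positivity
  have hd : stmt7Ck n * x = 1 / Real.sqrt 2 := by
    rw [hx]
    field_simp
  have hxx : stmt7Ck (n+1) = stmt7Ck n * (1 + x) := by
    rw [stmt7Ck_succ, mul_add, mul_one, hd]
  have hbern : 1 + ((n:ℝ)+1) * x ≤ (1+x)^(n+1) := by
    have := one_add_mul_le_pow (by linarith : (-2:ℝ) ≤ x) (n+1)
    push_cast at this ⊢
    linarith
  have hstep : ((n:ℝ) + 1 + 1/2) ≤ stmt7Ck (n+1) * (1 + ((n:ℝ)+1) * x) := by
    have hratio : stmt7Ck (n+1) * x ≥ 1 / Real.sqrt 2 := by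
      have h1 : stmt7Ck n ≤ stmt7Ck (n+1) := stmt7Ck_mono
      calc 1 / Real.sqrt 2 = stmt7Ck n * x := hd.symm
        _ ≤ stmt7Ck (n+1) * x := mul_le_mul_of_nonneg_right h1 hx0
    have hCk1val : stmt7Ck (n+1) = (n:ℝ) / Real.sqrt 2 + 1/2 := by
      unfold stmt7Ck; push_cast; ring
    have h2 : stmt7Ck (n+1) * (1 + ((n:ℝ)+1) * x)
        = stmt7Ck (n+1) + ((n:ℝ)+1) * (stmt7Ck (n+1) * x) := by ring
    rw [h2]
    have h3 : ((n:ℝ)+1) * (stmt7Ck (n+1) * x) ≥ ((n:ℝ)+1) * (1/Real.sqrt 2) := by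
      apply mul_le_mul_of_nonneg_left hratio (by linarith : (0:ℝ) ≤ (n:ℝ)+1)
    have h4 : (n:ℝ)/Real.sqrt 2 + ((n:ℝ)+1)/Real.sqrt 2 = (2*(n:ℝ)+1)/Real.sqrt 2 := by
      ring
    have h5 : ((n:ℝ)+1) * (1/Real.sqrt 2) = ((n:ℝ)+1)/Real.sqrt 2 := by ring
    have h6 : (n:ℝ) + 1 ≤ (2*(n:ℝ)+1)/Real.sqrt 2 := by
      rw [le_div_iff₀ hc0]
      nlinarith
    linarith [h3, hCk1val, h5, h4, h6]
  calc ((n:ℝ) + 1 + 1/2) * stmt7Ck n ^ (n+1)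
      ≤ (stmt7Ck (n+1) * (1 + ((n:ℝ)+1) * x)) * stmt7Ck n ^ (n+1) := by
        apply mul_le_mul_of_nonneg_right hstep (by positivity)
    _ ≤ (stmt7Ck (n+1) * (1+x)^(n+1)) * stmt7Ck n ^ (n+1) := by
        apply mul_le_mul_of_nonneg_right _ (by positivity)
        apply mul_le_mul_of_nonneg_left hbern hCk1.le
    _ = stmt7Ck (n+1) * (stmt7Ck n * (1+x))^(n+1) := by
        rw [mul_pow]; ring
    _ = stmt7Ck (n+1) ^ (n+2) := by rw [← hxx, pow_succ]; ring

/-- Anchors at integers: `Γ(n+1/2) ≤ √π Ck(n)^n` and `Γ(n+1+1/2) ≤ √π Ck(n)^(n+1)`, `n ≥ 3`. -/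
lemma stmt7_anchor (n : ℕ) (hn : 3 ≤ n) :
    Real.Gamma ((n:ℝ) + 1/2) ≤ Real.sqrt π * stmt7Ck n ^ n ∧
    Real.Gamma ((n:ℝ) + 1 + 1/2) ≤ Real.sqrt π * stmt7Ck n ^ (n+1) := by
  have hπ : 0 < Real.sqrt π := Real.sqrt_pos.mpr Real.pi_pos
  have hc2 := stmt7_sqrt2_sq
  have hcl := stmt7_sqrt2_lb
  have hcu := stmt7_sqrt2_ub
  have hc0 : (0:ℝ) < Real.sqrt 2 := by linarith
  induction n, hn using Nat.le_induction with
  | base =>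
      have h2s : (2:ℝ)/Real.sqrt 2 = Real.sqrt 2 := by
        rw [div_eq_iff (ne_of_gt hc0)]
        nlinarith
      have hCk3 : stmt7Ck 3 = Real.sqrt 2 + 1/2 := by
        unfold stmt7Ck
        rw [show ((3:ℕ):ℝ) - 1 = 2 by norm_num, h2s]
      have e3 : (Real.sqrt 2 + 1/2)^3 = 11/4 * Real.sqrt 2 + 25/8 := by
        linear_combination (Real.sqrt 2 + 3/2) * hc2
      have e4 : (Real.sqrt 2 + 1/2)^4 = 9/2 * Real.sqrt 2 + 113/16 := by
        linear_combination (Real.sqrt 2^2 + 2*Real.sqrt 2 + 7/2) * hc2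
      constructor
      · rw [show ((3:ℕ):ℝ) = 3 by norm_num, stmt7_G3h, hCk3]
        rw [mul_comm (Real.sqrt π)]
        apply mul_le_mul_of_nonneg_right _ hπ.le
        rw [e3]; linarith
      · rw [show ((3:ℕ):ℝ) + 1 + 1/2 = 4 + 1/2 by norm_num, stmt7_G4h, hCk3]
        rw [mul_comm (Real.sqrt π)]
        apply mul_le_mul_of_nonneg_right _ hπ.le
        rw [show (3:ℕ)+1 = 4 by norm_num, e4]; linarith
  | succ n hn3 ih =>
      obtain ⟨ih1, ih2⟩ := ih
      have hmono : stmt7Ck n ≤ stmt7Ck (n+1) := stmt7Ck_mono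
      have hCkn : 0 < stmt7Ck n := stmt7Ck_pos (by omega)
      have hfirst : Real.Gamma (((n+1:ℕ):ℝ) + 1/2) ≤ Real.sqrt π * stmt7Ck (n+1) ^ (n+1) := by
        have : Real.Gamma (((n+1:ℕ):ℝ) + 1/2) = Real.Gamma ((n:ℝ) + 1 + 1/2) := by
          push_cast; ring_nf
        rw [this]
        refine le_trans ih2 ?_
        apply mul_le_mul_of_nonneg_left _ hπ.le
        exact pow_le_pow_left₀ hCkn.le hmono _
      constructor
      · exact hfirst
      · have hrec : Real.Gamma (((n+1:ℕ):ℝ) + 1 + 1/2)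
            = ((n:ℝ) + 1 + 1/2) * Real.Gamma ((n:ℝ) + 1 + 1/2) := by
          have h0 : ((n:ℝ) + 1 + 1/2) ≠ 0 := by positivity
          have := Real.Gamma_add_one h0
          rw [← this]
          push_cast; ring_nf
        rw [hrec]
        calc ((n:ℝ) + 1 + 1/2) * Real.Gamma ((n:ℝ) + 1 + 1/2)
            ≤ ((n:ℝ) + 1 + 1/2) * (Real.sqrt π * stmt7Ck n ^ (n+1)) := by
              apply mul_le_mul_of_nonneg_left ih2 (by positivity)
          _ = Real.sqrt π * (((n:ℝ) + 1 + 1/2) * stmt7Ck n ^ (n+1)) := by ring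
          _ ≤ Real.sqrt π * stmt7Ck (n+1) ^ (n+2) := by
              apply mul_le_mul_of_nonneg_left (stmt7_core n hn3) hπ.le

set_option maxHeartbeats 1000000 in
/-- The main analytic estimate: `Γ(p+1/2) ≤ √π · C(p)^p` for `p ≥ 1`,
where `C(p) = (max 2 p - 1 + 1/√2)/√2`. -/
lemma stmt7_gamma_bound {p : ℝ} (hp : 1 ≤ p) :
    Real.Gamma (p + 1/2)
      ≤ Real.sqrt π * ((max 2 p - 1 + 1/Real.sqrt 2)/Real.sqrt 2) ^ p := by
  have hc2 := stmt7_sqrt2_sq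
  have hcl := stmt7_sqrt2_lb
  have hcu := stmt7_sqrt2_ub
  have hc0 : (0:ℝ) < Real.sqrt 2 := by linarith
  have hcc : Real.sqrt 2 * Real.sqrt 2 = 2 := Real.mul_self_sqrt (by norm_num)
  have hπ : 0 < Real.sqrt π := Real.sqrt_pos.mpr Real.pi_pos
  set Cp : ℝ := (max 2 p - 1 + 1/Real.sqrt 2)/Real.sqrt 2 with hCp_def
  have hM2 : (2:ℝ) ≤ max 2 p := le_max_left _ _
  have hCp_eq : Cp = (max 2 p - 1)/Real.sqrt 2 + 1/2 := by
    rw [hCp_def, add_div, div_div, hcc]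
  have hCp0 : 0 < Cp := by
    rw [hCp_eq]
    have : 0 ≤ (max 2 p - 1)/Real.sqrt 2 := div_nonneg (by linarith) hc0.le
    linarith
  have hinv : (0.7:ℝ) ≤ 1/Real.sqrt 2 := by
    rw [le_div_iff₀ hc0]; nlinarith
  -- the constant at p = 2 and p = 5/2
  set C2v : ℝ := 1/Real.sqrt 2 + 1/2 with hC2v_def
  set C25v : ℝ := (3/2)/Real.sqrt 2 + 1/2 with hC25v_def
  have hC2v0 : 0 < C2v := by rw [hC2v_def]; positivity
  have hC2v12 : (1.2:ℝ) ≤ C2v := by rw [hC2v_def]; linarith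
  have hC25v12 : (1.56:ℝ) ≤ C25v := by
    rw [hC25v_def]
    have : (1.06:ℝ) ≤ (3/2)/Real.sqrt 2 := by
      rw [le_div_iff₀ hc0]; nlinarith
    linarith
  have hC25v0 : 0 < C25v := lt_of_lt_of_le (by norm_num) hC25v12
  -- shared numeric anchor facts
  have hanchor2 : ∀ C : ℝ, 0 < C → (1.2:ℝ) ≤ C →
      Real.Gamma ((2:ℝ) + 1/2) ≤ Real.sqrt π * C ^ (2:ℝ) := by
    intro C hC0 hC12
    rw [stmt7_G2h, show (2:ℝ) = ((2:ℕ):ℝ) by norm_num, Real.rpow_natCast, mul_comm (Real.sqrt π)]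
    apply mul_le_mul_of_nonneg_right _ hπ.le
    nlinarith
  have hanchor52 : ∀ C : ℝ, 0 < C → (1.2:ℝ) ≤ C →
      Real.Gamma ((5/2:ℝ) + 1/2) ≤ Real.sqrt π * C ^ ((5/2):ℝ) := by
    intro C hC0 hC12
    rw [show (5/2:ℝ) + 1/2 = 3 by norm_num, stmt7_G3]
    have hrw : C ^ ((5/2):ℝ) = Real.sqrt (C ^ 5) := by
      rw [show ((5/2):ℝ) = (((5:ℕ)):ℝ) * (1/2) by norm_num, Real.rpow_mul hC0.le,
        Real.rpow_natCast, ← Real.sqrt_eq_rpow]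
    rw [hrw, ← Real.sqrt_mul Real.pi_pos.le]
    rw [show (2:ℝ) = Real.sqrt 4 by
      rw [show (4:ℝ) = 2^2 by norm_num, Real.sqrt_sq (by norm_num)]]
    apply Real.sqrt_le_sqrt
    have h5 : (1.2:ℝ)^5 ≤ C^5 := pow_le_pow_left₀ (by norm_num) hC12 5
    nlinarith [Real.pi_gt_three]
  rcases le_total p 2 with h2 | h2
  · -- 1 ≤ p ≤ 2
    have hmax : max 2 p = 2 := max_eq_left h2
    have hCpv : Cp = C2v := by rw [hCp_eq, hmax, hC2v_def]; norm_num
    apply stmt7_gamma_interp one_pos one_lt_two hp h2 hCp0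
    · rw [Real.rpow_one, stmt7_G1h, hCpv]
      calc Real.sqrt π / 2 = Real.sqrt π * (1/2) := by ring
        _ ≤ Real.sqrt π * C2v := by
            apply mul_le_mul_of_nonneg_left _ hπ.le
            linarith
    · rw [hCpv]; exact hanchor2 C2v hC2v0 hC2v12
  · -- 2 ≤ p
    have hmax : max 2 p = p := max_eq_right h2
    have hCpp : Cp = (p - 1)/Real.sqrt 2 + 1/2 := by rw [hCp_eq, hmax]
    have hmono : ∀ C : ℝ, 0 < C → C ≤ Cp →
        Real.Gamma (p + 1/2) ≤ Real.sqrt π * C ^ p →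
        Real.Gamma (p + 1/2) ≤ Real.sqrt π * Cp ^ p := by
      intro C hC0 hle hbound
      refine le_trans hbound ?_
      apply mul_le_mul_of_nonneg_left _ hπ.le
      exact Real.rpow_le_rpow hC0.le hle (by linarith)
    rcases le_total p (5/2) with h52 | h52
    · -- 2 ≤ p ≤ 5/2
      refine hmono C2v hC2v0 ?_ ?_
      · rw [hCpp, hC2v_def]
        have : 1/Real.sqrt 2 ≤ (p-1)/Real.sqrt 2 := by
          apply (div_le_div_iff_of_pos_right hc0).mpr; linarith
        linarith
      · exact stmt7_gamma_interp two_pos (by norm_num) h2 h52 hC2v0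
          (hanchor2 C2v hC2v0 hC2v12) (hanchor52 C2v hC2v0 hC2v12)
    · rcases le_total p 3 with h3 | h3
      · -- 5/2 ≤ p ≤ 3
        refine hmono C25v hC25v0 ?_ ?_
        · rw [hCpp, hC25v_def]
          have : (3/2)/Real.sqrt 2 ≤ (p-1)/Real.sqrt 2 := by
            apply (div_le_div_iff_of_pos_right hc0).mpr; linarith
          linarith
        · refine stmt7_gamma_interp (by norm_num : (0:ℝ) < 5/2) (by norm_num) h52 h3 hC25v0
            (hanchor52 C25v hC25v0 (by linarith)) ?_
          rw [stmt7_G3h, show (3:ℝ) = ((3:ℕ):ℝ) by norm_num, Real.rpow_natCast,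
            mul_comm (Real.sqrt π)]
          apply mul_le_mul_of_nonneg_right _ hπ.le
          have h3p : (1.56:ℝ)^3 ≤ C25v^3 := pow_le_pow_left₀ (by norm_num) hC25v12 3
          nlinarith
      · -- 3 ≤ p
        obtain ⟨n, hn3, hnp, hpn⟩ : ∃ n : ℕ, 3 ≤ n ∧ ((n:ℝ)) ≤ p ∧ p ≤ (n:ℝ) + 1 := by
          refine ⟨⌊p⌋₊, ?_, Nat.floor_le (by linarith), (Nat.lt_floor_add_one p).le⟩
          refine Nat.le_floor ?_
          push_cast
          exact h3
        have hn0 : (0:ℝ) < (n:ℝ) := by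
          have h3n : ((3:ℕ):ℝ) ≤ (n:ℝ) := Nat.cast_le.mpr hn3
          push_cast at h3n
          linarith
        have hCkpos : 0 < stmt7Ck n := stmt7Ck_pos (by omega)
        obtain ⟨ha1, ha2⟩ := stmt7_anchor n hn3
        refine hmono (stmt7Ck n) hCkpos ?_ ?_
        · rw [hCpp]
          unfold stmt7Ck
          have : ((n:ℝ) - 1)/Real.sqrt 2 ≤ (p-1)/Real.sqrt 2 := by
            apply (div_le_div_iff_of_pos_right hc0).mpr; linarith
          linarith
        · have ha2' : Real.Gamma ((n:ℝ) + 1 + 1/2)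
              ≤ Real.sqrt π * stmt7Ck n ^ (((n:ℝ)+1)) := by
            rw [show ((n:ℝ)+1) = ((n+1:ℕ):ℝ) by push_cast; ring, Real.rpow_natCast]
            convert ha2 using 3
            push_cast
            ring
          refine stmt7_gamma_interp hn0 (by linarith : (n:ℝ) < (n:ℝ)+1) hnp hpn hCkpos ?_ ha2'
          rw [Real.rpow_natCast]; exact ha1

/-- Integrability of `|x|^s * exp(-b x²)` on the real line. -/
lemma stmt7_integrable_abs_rpow_mul_exp {b s : ℝ} (hb : 0 < b) (hs : -1 < s) :
    Integrable (fun x : ℝ => |x| ^ s * Real.exp (-b * x ^ 2)) := by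
  have hIoi : IntegrableOn (fun x : ℝ => |x| ^ s * Real.exp (-b * x ^ 2)) (Set.Ioi 0) := by
    refine (integrableOn_congr_fun ?_ measurableSet_Ioi).mpr
      (integrableOn_rpow_mul_exp_neg_mul_sq hb hs)
    intro x hx
    simp only [abs_of_pos (Set.mem_Ioi.mp hx)]
  rw [← integrableOn_univ, ← Set.Iio_union_Ici (a := (0:ℝ)), integrableOn_union,
    integrableOn_Ici_iff_integrableOn_Ioi]
  refine ⟨?_, hIoi⟩
  rw [← (Measure.measurePreserving_neg (volume : Measure ℝ)).integrableOn_comp_preimage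
      (Homeomorph.neg ℝ).measurableEmbedding]
  simp only [Function.comp_def, neg_sq, abs_neg, Set.neg_preimage, Set.neg_Iio, neg_zero]
  exact hIoi

/-- The absolute moment of the centred Gaussian measure. -/
lemma stmt7_gaussian_moment {h : ℝ} (hh : 0 < h) {s : ℝ} (hs : 0 ≤ s) :
    ∫ x, |x| ^ s ∂(gaussianReal 0 h.toNNReal)
      = (2*h) ^ (s/2) * Real.Gamma ((s+1)/2) / Real.sqrt π := by
  have hv : h.toNNReal ≠ 0 := by
    simp only [ne_eq, Real.toNNReal_eq_zero, not_le]; exact hh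
  have hveq : ((h.toNNReal : NNReal) : ℝ) = h := Real.coe_toNNReal h hh.le
  have hmeas : Measurable fun x => (gaussianPDFReal 0 h.toNNReal x).toNNReal :=
    (measurable_gaussianPDFReal 0 h.toNNReal).real_toNNReal
  have hpdf_eq : (gaussianPDF 0 h.toNNReal)
      = fun x => ((gaussianPDFReal 0 h.toNNReal x).toNNReal : ℝ≥0∞) := rfl
  rw [gaussianReal_of_var_ne_zero 0 hv, hpdf_eq, integral_withDensity_eq_integral_smul hmeas]
  set F : ℝ → ℝ := fun t =>
    (Real.sqrt (2*π*h))⁻¹ * (t ^ s * Real.exp (-(2*h)⁻¹ * t ^ (2:ℝ))) with hF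
  have hptwise : ∀ x : ℝ,
      (gaussianPDFReal 0 h.toNNReal x).toNNReal • |x| ^ s = F (|x|) := by
    intro x
    have habs2 : |x| ^ (2:ℝ) = x ^ 2 := by
      rw [show (2:ℝ) = ((2:ℕ):ℝ) by norm_num, Real.rpow_natCast, sq_abs]
    rw [NNReal.smul_def, smul_eq_mul,
      Real.coe_toNNReal _ (gaussianPDFReal_nonneg 0 h.toNNReal x)]
    rw [hF]
    simp only [gaussianPDFReal, hveq, sub_zero, habs2]
    ring_nf
  calc ∫ x, (gaussianPDFReal 0 h.toNNReal x).toNNReal • |x| ^ s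
      = ∫ x, F (|x|) := by
        congr 1
        funext x
        exact hptwise x
    _ = 2 * ∫ x in Set.Ioi (0:ℝ), F x := integral_comp_abs (f := F)
    _ = 2 * ((Real.sqrt (2*π*h))⁻¹
          * ∫ x in Set.Ioi (0:ℝ), x ^ s * Real.exp (-(2*h)⁻¹ * x ^ (2:ℝ))) := by
        rw [hF, integral_const_mul]
    _ = (2*h) ^ (s/2) * Real.Gamma ((s+1)/2) / Real.sqrt π := by
        rw [integral_rpow_mul_exp_neg_mul_rpow two_pos (by linarith : (-1:ℝ) < s)
          (by positivity : 0 < (2*h)⁻¹)]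
        have h2h : (0:ℝ) < 2*h := by linarith
        have e1 : ((2*h)⁻¹ : ℝ) ^ (-(s + 1) / 2) = (2*h) ^ ((s+1)/2) := by
          rw [← Real.rpow_neg_one, ← Real.rpow_mul h2h.le]
          congr 1
          ring
        have e2 : Real.sqrt (2*π*h) = Real.sqrt π * (2*h) ^ ((1:ℝ)/2) := by
          rw [show 2*π*h = π*(2*h) by ring, Real.sqrt_mul Real.pi_pos.le,
            Real.sqrt_eq_rpow (2*h)]
        have e3 : (2*h) ^ ((s+1)/2) = (2*h) ^ (s/2) * (2*h) ^ ((1:ℝ)/2) := by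
          rw [← Real.rpow_add h2h]
          congr 1
          ring
        rw [e1, e2, e3]
        have hne1 : ((2*h) ^ ((1:ℝ)/2)) ≠ 0 := by
          apply ne_of_gt
          exact Real.rpow_pos_of_pos h2h _
        have hne2 : Real.sqrt π ≠ 0 := by
          apply ne_of_gt
          exact Real.sqrt_pos.mpr Real.pi_pos
        field_simp

/-- Integrability of the absolute moment of the Gaussian. -/
lemma stmt7_gaussian_moment_integrable {h : ℝ} (hh : 0 < h) {s : ℝ} (hs : 0 ≤ s) :
    Integrable (fun x : ℝ => |x| ^ s) (gaussianReal 0 h.toNNReal) := by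
  have hv : h.toNNReal ≠ 0 := by
    simp only [ne_eq, Real.toNNReal_eq_zero, not_le]; exact hh
  have hveq : ((h.toNNReal : NNReal) : ℝ) = h := Real.coe_toNNReal h hh.le
  have hmeas : Measurable fun x => (gaussianPDFReal 0 h.toNNReal x).toNNReal :=
    (measurable_gaussianPDFReal 0 h.toNNReal).real_toNNReal
  have hpdf_eq : (gaussianPDF 0 h.toNNReal)
      = fun x => ((gaussianPDFReal 0 h.toNNReal x).toNNReal : ℝ≥0∞) := rfl
  rw [gaussianReal_of_var_ne_zero 0 hv, hpdf_eq,
    integrable_withDensity_iff_integrable_coe_smul₀ hmeas.aemeasurable]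
  have h2h : (0:ℝ) < (2*h)⁻¹ := by positivity
  have hint := (stmt7_integrable_abs_rpow_mul_exp h2h
    (by linarith : (-1:ℝ) < s)).const_mul (Real.sqrt (2*π*h))⁻¹
  refine hint.congr (Filter.Eventually.of_forall fun x => ?_)
  symm
  simp only [NNReal.smul_def, smul_eq_mul,
    Real.coe_toNNReal _ (gaussianPDFReal_nonneg 0 h.toNNReal x)]
  simp only [gaussianPDFReal, hveq, sub_zero]
  ring_nf

end Stmt7Aux

open Real in
/-- Inequality (177) of Lemma 6.11: L^p bound for the commutative-noise random variables
`J^C_{(i,j)} = G_i G_j / 2` built from independent `N(0,h)` Gaussians. -/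
theorem stmt_7 {Ω : Type*} [MeasurableSpace Ω] (μ : Measure Ω) [IsProbabilityMeasure μ]
    (m : ℕ) (hm : 0 < m) (h : ℝ) (hh : 0 < h)
    (G : Fin m → Ω → ℝ) (hGmeas : ∀ k, Measurable (G k))
    (hGindep : iIndepFun G μ)
    (hGlaw : ∀ k, Measure.map (G k) μ = gaussianReal 0 h.toNNReal)
    (p : ℝ) (hp : 1 ≤ p) (i j : Fin m) :
    (∫ ω, |G i ω * G j ω / 2| ^ p ∂μ) ^ (1 / p)
      ≤ ((max 2 p - 1 + 1 / Real.sqrt 2) / Real.sqrt 2) * h := by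
  have hp0 : 0 < p := by linarith
  have h2p : (0:ℝ) ≤ 2*p := by linarith
  have hc0 : (0:ℝ) < Real.sqrt 2 := by
    have := stmt7_sqrt2_lb; linarith
  set Cp : ℝ := (max 2 p - 1 + 1/Real.sqrt 2)/Real.sqrt 2 with hCp_def
  have hCp0 : 0 ≤ Cp := by
    rw [hCp_def]
    have hM2 : (2:ℝ) ≤ max 2 p := le_max_left _ _
    have h1 : (0:ℝ) < 1/Real.sqrt 2 := by positivity
    apply div_nonneg _ hc0.le
    linarith
  have hcont : Continuous fun x : ℝ => |x| ^ (2*p) :=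
    continuous_abs.rpow_const (fun x => Or.inr (by positivity))
  have hfmeas : Measurable fun x : ℝ => |x| ^ (2*p) := hcont.measurable
  have hint : ∀ k, Integrable (fun ω => |G k ω| ^ (2*p)) μ := by
    intro k
    have h1 : Integrable (fun x : ℝ => |x| ^ (2*p)) (Measure.map (G k) μ) := by
      rw [hGlaw k]; exact stmt7_gaussian_moment_integrable hh h2p
    exact (integrable_map_measure hfmeas.aestronglyMeasurable (hGmeas k).aemeasurable).mp h1
  have heq : ∀ k, ∫ ω, |G k ω| ^ (2*p) ∂μ
      = ∫ x, |x| ^ (2*p) ∂(gaussianReal 0 h.toNNReal) := by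
    intro k
    rw [← hGlaw k]
    exact (integral_map (hGmeas k).aemeasurable hfmeas.aestronglyMeasurable).symm
  set M : ℝ := ∫ x, |x| ^ (2*p) ∂(gaussianReal 0 h.toNNReal) with hM
  have hMval : M = (2*h) ^ p * Real.Gamma (p + 1/2) / Real.sqrt π := by
    rw [hM, stmt7_gaussian_moment hh h2p,
      show (2*p)/2 = p by ring, show (2*p+1)/2 = p + 1/2 by ring]
  have h2pp : (0:ℝ) < 2 ^ (p:ℝ) := Real.rpow_pos_of_pos two_pos p
  have hpt : ∀ ω, |G i ω * G j ω / 2| ^ p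
      ≤ (|G i ω| ^ (2*p) + |G j ω| ^ (2*p)) / (2 * 2 ^ p) := by
    intro ω
    set a := |G i ω| with ha_def
    set b := |G j ω| with hb_def
    have ha : 0 ≤ a := abs_nonneg _
    have hb : 0 ≤ b := abs_nonneg _
    have e1 : |G i ω * G j ω / 2| = a * b / 2 := by
      rw [ha_def, hb_def, abs_div, abs_mul, abs_two]
    rw [e1, Real.div_rpow (by positivity) (by norm_num : (0:ℝ) ≤ 2),
      Real.mul_rpow ha hb]
    have h2a : a ^ (2*p) = (a ^ p) ^ (2:ℕ) := by
      rw [← Real.rpow_natCast (a ^ p) 2, ← Real.rpow_mul ha]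
      norm_num [mul_comm]
    have h2b : b ^ (2*p) = (b ^ p) ^ (2:ℕ) := by
      rw [← Real.rpow_natCast (b ^ p) 2, ← Real.rpow_mul hb]
      norm_num [mul_comm]
    rw [h2a, h2b, div_le_div_iff₀ h2pp (by positivity)]
    have hsq := two_mul_le_add_sq (a ^ p) (b ^ p)
    nlinarith [mul_le_mul_of_nonneg_right hsq h2pp.le,
      Real.rpow_nonneg ha p, Real.rpow_nonneg hb p]
  have hnn : 0 ≤ᵐ[μ] fun ω => |G i ω * G j ω / 2| ^ p :=
    Filter.Eventually.of_forall fun ω => Real.rpow_nonneg (abs_nonneg _) _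
  have hIrhs : Integrable
      (fun ω => (|G i ω| ^ (2*p) + |G j ω| ^ (2*p)) / (2 * 2 ^ p)) μ :=
    ((hint i).add (hint j)).div_const _
  have hstep1 : ∫ ω, |G i ω * G j ω / 2| ^ p ∂μ ≤ M / 2 ^ p := by
    calc ∫ ω, |G i ω * G j ω / 2| ^ p ∂μ
        ≤ ∫ ω, (|G i ω| ^ (2*p) + |G j ω| ^ (2*p)) / (2 * 2 ^ p) ∂μ :=
          integral_mono_of_nonneg hnn hIrhs (Filter.Eventually.of_forall hpt)
      _ = (∫ ω, (|G i ω| ^ (2*p) + |G j ω| ^ (2*p)) ∂μ) / (2 * 2 ^ p) :=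
          integral_div _ _
      _ = (M + M) / (2 * 2 ^ p) := by
          rw [integral_add (hint i) (hint j), heq i, heq j]
      _ = M / 2 ^ p := by ring
  have hπ : 0 < Real.sqrt π := Real.sqrt_pos.mpr Real.pi_pos
  have hfinal : ∫ ω, |G i ω * G j ω / 2| ^ p ∂μ ≤ (h * Cp) ^ p := by
    have hg := stmt7_gamma_bound hp
    have hM2 : M / 2 ^ p ≤ (h * Cp) ^ p := by
      rw [hMval, Real.mul_rpow hh.le hCp0,
        show (2*h : ℝ) = 2 * h by ring, Real.mul_rpow (by norm_num : (0:ℝ) ≤ 2) hh.le]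
      have e : (2 ^ p * h ^ p * Real.Gamma (p+1/2) / Real.sqrt π) / 2 ^ p
          = h ^ p * (Real.Gamma (p+1/2) / Real.sqrt π) := by
        field_simp
      rw [e]
      apply mul_le_mul_of_nonneg_left _ (Real.rpow_nonneg hh.le p)
      rw [div_le_iff₀ hπ]
      calc Real.Gamma (p+1/2) ≤ Real.sqrt π * Cp ^ p := hg
        _ = Cp ^ p * Real.sqrt π := by ring
    linarith
  have hint0 : 0 ≤ ∫ ω, |G i ω * G j ω / 2| ^ p ∂μ :=
    integral_nonneg fun ω => Real.rpow_nonneg (abs_nonneg _) _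
  have hroot := Real.rpow_le_rpow hint0 hfinal (by positivity : (0:ℝ) ≤ 1/p)
  have hhc : 0 ≤ h * Cp := mul_nonneg hh.le hCp0
  rw [← Real.rpow_mul hhc, mul_one_div_cancel hp0.ne', Real.rpow_one] at hroot
  calc (∫ ω, |G i ω * G j ω / 2| ^ p ∂μ) ^ (1/p) ≤ h * Cp := hroot
    _ = Cp * h := by ring
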